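/- Let k ≥ 2, l ≥ 3, and n be positive integers such that F_l^k exactly divides F_n (i.e., F_l^k ∣ F_n but F_l^(k+1) ∤ F_n) and l is not congruent to 3 modulo 6. Then F_l^(k-1) exactly divides n/l. -/

import Mathlib

open Nat Finset

lemma binom_shift (q r : ℕ) (g : ℕ → ℕ) (m : ℕ) :
    ∑ i ∈ range (m+2), (m+1).choose i * q^i * r^(m+1-i) * g i
    = r * ∑ i ∈ range (m+1), m.choose i * q^i * r^(m-i) * g i
    + q * ∑ i ∈ range (m+1), m.choose i * q^i * r^(m-i) * g (i+1) := by
  rw [Finset.sum_range_succ' (fun i => (m+1).choose i * q^i * r^(m+1-i) * g i) (m+1)]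
  have e1 : ∀ i ∈ range (m+1), (m+1).choose (i+1) * q^(i+1) * r^(m+1-(i+1)) * g (i+1)
      = q * (m.choose i * q^i * r^(m-i) * g (i+1))
        + m.choose (i+1) * q^(i+1) * r^(m-i) * g (i+1) := by
    intro i hi
    rw [Nat.choose_succ_succ]
    have h : m + 1 - (i+1) = m - i := by omega
    rw [h]; ring
  rw [Finset.sum_congr rfl e1, Finset.sum_add_distrib, ← Finset.mul_sum]
  have e2 : ∑ i ∈ range (m+1), m.choose (i+1) * q^(i+1) * r^(m-i) * g (i+1)
      = ∑ i ∈ range m, m.choose (i+1) * q^(i+1) * r^(m-i) * g (i+1) := by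
    rw [Finset.sum_range_succ, Nat.choose_succ_self]; simp
  have e3 : r * ∑ i ∈ range (m+1), m.choose i * q^i * r^(m-i) * g i
      = (∑ i ∈ range m, m.choose (i+1) * q^(i+1) * r^(m-i) * g (i+1)) + r^(m+1) * g 0 := by
    rw [Finset.mul_sum, Finset.sum_range_succ' (fun i => r * (m.choose i * q^i * r^(m-i) * g i)) m]
    congr 1
    · apply Finset.sum_congr rfl
      intro i hi
      simp only [Finset.mem_range] at hi
      have h1 : m - (i+1) + 1 = m - i := by omega
      rw [← h1]; ring
    · simp; ring
  rw [e2, e3]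
  simp
  ring

lemma fib_mul_eq (l : ℕ) (hl : 1 ≤ l) : ∀ m : ℕ,
    fib (l * m) = ∑ i ∈ range (m+1), m.choose i * fib l ^ i * fib (l-1) ^ (m-i) * fib i ∧
    fib (l * m + 1) = ∑ i ∈ range (m+1), m.choose i * fib l ^ i * fib (l-1) ^ (m-i) * fib (i+1)
  | 0 => by simp
  | (m+1) => by
    obtain ⟨ih1, ih2⟩ := fib_mul_eq l hl m
    have hl1 : l - 1 + 1 = l := by omega
    have hadd1 : fib (l*m + l) = fib (l*m) * fib (l-1) + fib (l*m+1) * fib l := by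
      conv_lhs => rw [← hl1]
      rw [← Nat.add_assoc, Nat.fib_add, hl1]
    have hadd2 : fib (l*m + l + 1) = fib (l*m) * fib l + fib (l*m+1) * fib (l+1) :=
      Nat.fib_add (l*m) l
    have hfl1 : fib (l+1) = fib (l-1) + fib l := by
      conv_lhs => rw [← hl1]
      show fib (l-1+2) = _
      rw [Nat.fib_add_two, hl1]
    have hs := binom_shift (fib l) (fib (l-1)) (fun i => fib i) m
    have ht := binom_shift (fib l) (fib (l-1)) (fun i => fib (i+1)) m
    constructor
    · rw [Nat.mul_succ, hadd1, ih1, ih2]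
      rw [show m+1+1 = m+2 from rfl, hs]
      ring
    · rw [Nat.mul_succ, hadd2, hfl1, ih1, ih2]
      rw [show m+1+1 = m+2 from rfl, ht]
      have hsplit : ∑ i ∈ range (m+1), m.choose i * fib l^i * fib (l-1)^(m-i) * fib (i+1+1)
          = (∑ i ∈ range (m+1), m.choose i * fib l^i * fib (l-1)^(m-i) * fib i)
          + ∑ i ∈ range (m+1), m.choose i * fib l^i * fib (l-1)^(m-i) * fib (i+1) := by
        rw [← Finset.sum_add_distrib]
        refine Finset.sum_congr rfl fun i _ => ?_
        rw [Nat.fib_add_two]; ring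
      rw [hsplit]
      ring

lemma fib_mul_split (l m : ℕ) (hl : 1 ≤ l) (hm : 1 ≤ m) :
    fib (l * m) = m * fib l * fib (l-1) ^ (m-1)
      + ∑ i ∈ Ico 2 (m+1), m.choose i * fib l ^ i * fib (l-1) ^ (m-i) * fib i := by
  have h := (fib_mul_eq l hl m).1
  rw [h, range_eq_Ico, Finset.sum_eq_sum_Ico_succ_bot (by omega),
    Finset.sum_eq_sum_Ico_succ_bot (by omega)]
  simp [Nat.choose_one_right]

-- 2e+1 ≤ 3^e
lemma three_pow_bound : ∀ e : ℕ, 2*e+1 ≤ 3^e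
  | 0 => by norm_num
  | (e+1) => by
    have := three_pow_bound e
    have h3 : 3^e ≥ 1 := Nat.one_le_pow _ _ (by norm_num)
    calc 2*(e+1)+1 = (2*e+1) + 2 := by ring
    _ ≤ 3^e + 2*3^e := by omega
    _ = 3^(e+1) := by ring

lemma term_dvd (p : ℕ) (hp : p.Prime) (q r : ℕ) (m i c ν : ℕ) (hc : 1 ≤ c)
    (hcond : 2 ≤ c ∨ p ≠ 2) (hqc : p ^ c ∣ q) (hν : p ^ ν ∣ m)
    (hi : 2 ≤ i) (him : i ≤ m) (fi : ℕ) :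
    p ^ (c + ν + 1) ∣ m.choose i * q ^ i * r ^ (m - i) * fi := by
  set e := i.factorization p with he
  have hi0 : i ≠ 0 := by omega
  have hordp : p ^ e * (i / p ^ e) = i := Nat.ordProj_mul_ordCompl_eq_self i p
  have hu : ¬ p ∣ (i / p ^ e) := Nat.not_dvd_ordCompl hp hi0
  have hple : p ^ e ≤ i := Nat.ordProj_le p hi0
  -- p^ν ∣ choose m i * i
  have hm0 : 1 ≤ m := by omega
  have hkey : m * (m-1).choose (i-1) = m.choose i * i := by
    have := Nat.add_one_mul_choose_eq (m-1) (i-1)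
    rw [show m - 1 + 1 = m by omega, show i - 1 + 1 = i by omega] at this
    exact this
  have h1 : p ^ ν ∣ m.choose i * p ^ e * (i / p ^ e) := by
    rw [Nat.mul_assoc, hordp]
    exact hkey ▸ Dvd.dvd.mul_right hν _
  have h2 : p ^ ν ∣ m.choose i * p ^ e := by
    refine (Nat.Coprime.dvd_of_dvd_mul_right ?_ h1)
    exact Nat.Coprime.pow_left _ ((Nat.Prime.coprime_iff_not_dvd hp).2 hu)
  -- exponent arithmetic : c + ν + 1 + e ≤ ν + c * i
  have harith : c + 1 + e ≤ c * i := by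
    rcases Nat.eq_zero_or_pos e with h0 | h0
    · simp only [h0]; nlinarith
    · rcases hcond with h2c | hodd
      · have h2e : e + 1 ≤ 2^e := Nat.lt_two_pow_self
        have : 2^e ≤ p^e := Nat.pow_le_pow_left hp.two_le e
        have : e + 1 ≤ i := by omega
        nlinarith
      · have hp3 : 3 ≤ p := by
          rcases hp.two_le.lt_or_eq with h | h
          · omega
          · exact absurd h.symm hodd
        have h3e : 3^e ≤ p^e := Nat.pow_le_pow_left hp3 e
        have := three_pow_bound e
        have : 2*e + 1 ≤ i := by omega
        nlinarith
  -- combine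
  have h3 : p ^ (ν + c * i) ∣ (m.choose i * p ^ e) * q ^ i := by
    have hq2 : p ^ (c*i) ∣ q ^ i := by
      have h := pow_dvd_pow_of_dvd hqc i; rwa [← pow_mul] at h
    rw [pow_add]
    exact Nat.mul_dvd_mul h2 hq2
  have h4 : p ^ e * p ^ (c + ν + 1) ∣ p ^ e * (m.choose i * q ^ i) := by
    have hle : e + (c + ν + 1) ≤ ν + c * i := by omega
    calc p ^ e * p ^ (c + ν + 1) = p ^ (e + (c + ν + 1)) := (pow_add p e (c + ν + 1)).symm
    _ ∣ p ^ (ν + c * i) := pow_dvd_pow p hle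
    _ ∣ (m.choose i * p ^ e) * q ^ i := h3
    _ = p ^ e * (m.choose i * q ^ i) := by ring
  have h5 : p ^ (c + ν + 1) ∣ m.choose i * q ^ i :=
    (Nat.mul_dvd_mul_iff_left (pow_pos hp.pos e)).mp h4
  calc p ^ (c + ν + 1) ∣ m.choose i * q ^ i := h5
  _ ∣ m.choose i * q ^ i * (r ^ (m-i) * fi) := dvd_mul_right _ _
  _ = m.choose i * q ^ i * r ^ (m - i) * fi := by ring

lemma fib_val (p l m : ℕ) (hp : p.Prime) (hl : 1 ≤ l) (hm : 1 ≤ m)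
    (hpq : p ∣ fib l) (hcond : 2 ≤ (fib l).factorization p ∨ p ≠ 2) :
    (fib (l * m)).factorization p = (fib l).factorization p + m.factorization p := by
  set c := (fib l).factorization p with hcdef
  set ν := m.factorization p with hνdef
  have hq0 : fib l ≠ 0 := by
    have := Nat.fib_pos.mpr (show 0 < l by omega); omega
  have hm0 : m ≠ 0 := by omega
  have hc1 : 1 ≤ c := Nat.Prime.factorization_pos_of_dvd hp hq0 hpq
  have hpr : ¬ p ∣ fib (l-1) := by
    intro hdr
    have hco : Nat.Coprime (fib (l-1)) (fib (l-1+1)) := Nat.fib_coprime_fib_succ (l-1)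
    rw [show l - 1 + 1 = l by omega] at hco
    have hd1 : p ∣ Nat.gcd (fib (l-1)) (fib l) := Nat.dvd_gcd hdr hpq
    rw [hco] at hd1
    have := Nat.dvd_one.mp hd1
    have := hp.two_le
    omega
  have hqc : p ^ c ∣ fib l := Nat.ordProj_dvd _ _
  have hν1 : p ^ ν ∣ m := Nat.ordProj_dvd _ _
  have hr0 : fib (l-1) ^ (m-1) ≠ 0 := by
    apply pow_ne_zero; intro h; rw [h] at hpr; exact hpr (dvd_zero p)
  have hsplit := fib_mul_split l m hl hm
  have hTdvd : p ^ (c + ν + 1) ∣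
      ∑ i ∈ Ico 2 (m+1), m.choose i * fib l ^ i * fib (l-1) ^ (m-i) * fib i := by
    refine Finset.dvd_sum fun i hi => ?_
    rw [Finset.mem_Ico] at hi
    exact term_dvd p hp (fib l) (fib (l-1)) m i c ν hc1 hcond hqc hν1 hi.1 (by omega) _
  have hMfact : (m * fib l * fib (l-1) ^ (m-1)).factorization p = ν + c := by
    rw [Nat.factorization_mul (Nat.mul_ne_zero hm0 hq0) hr0,
      Nat.factorization_mul hm0 hq0]
    simp only [Finsupp.add_apply]
    rw [Nat.factorization_pow]
    simp [Nat.factorization_eq_zero_of_not_dvd hpr]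
    omega
  have hMdvd : p ^ (c + ν) ∣ m * fib l * fib (l-1) ^ (m-1) := by
    have h1 : p ^ ν * p ^ c ∣ m * fib l := Nat.mul_dvd_mul hν1 hqc
    calc p ^ (c+ν) = p ^ ν * p ^ c := by rw [← pow_add, Nat.add_comm]
    _ ∣ m * fib l := h1
    _ ∣ m * fib l * fib (l-1) ^ (m-1) := dvd_mul_right _ _
  have hfib0 : fib (l*m) ≠ 0 := by
    have := Nat.fib_pos.mpr (show 0 < l*m from Nat.mul_pos (by omega) (by omega)); omega
  have hM0 : m * fib l * fib (l-1) ^ (m-1) ≠ 0 :=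
    Nat.mul_ne_zero (Nat.mul_ne_zero hm0 hq0) hr0
  have hge : c + ν ≤ (fib (l*m)).factorization p := by
    rw [← Nat.Prime.pow_dvd_iff_le_factorization hp hfib0, hsplit]
    exact Nat.dvd_add hMdvd (dvd_trans (pow_dvd_pow p (by omega)) hTdvd)
  have hub : ¬ p ^ (c + ν + 1) ∣ fib (l*m) := by
    intro hdvd
    have hMd : p ^ (c+ν+1) ∣ m * fib l * fib (l-1) ^ (m-1) := by
      have h1 : m * fib l * fib (l-1)^(m-1)
          = fib (l*m) - ∑ i ∈ Ico 2 (m+1), m.choose i * fib l ^ i * fib (l-1) ^ (m-i) * fib i := by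
        omega
      rw [h1]; exact Nat.dvd_sub hdvd hTdvd
    have := (Nat.Prime.pow_dvd_iff_le_factorization hp hM0).mp hMd
    rw [hMfact] at this; omega
  have hub2 : ¬ (c + ν + 1 ≤ (fib (l*m)).factorization p) := fun h =>
    hub ((Nat.Prime.pow_dvd_iff_le_factorization hp hfib0).mpr h)
  omega

lemma fib_l_dvd (l n : ℕ) (hl : 3 ≤ l) (h : fib l ∣ fib n) : l ∣ n := by
  have h2 : 2 ≤ fib l := by
    calc 2 = fib 3 := by decide
    _ ≤ fib l := Nat.fib_mono hl
  have hg : fib (Nat.gcd l n) = fib l := by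
    rw [Nat.fib_gcd]; exact Nat.gcd_eq_left h
  have hgl : Nat.gcd l n ∣ l := Nat.gcd_dvd_left l n
  have hgle : Nat.gcd l n ≤ l := Nat.le_of_dvd (by omega) hgl
  rcases Nat.lt_or_ge (Nat.gcd l n) 2 with hlt | hge
  · exfalso
    have hle1 : fib (Nat.gcd l n) ≤ 1 := by
      calc fib (Nat.gcd l n) ≤ fib 1 := Nat.fib_mono (by omega)
      _ = 1 := rfl
    omega
  · rcases Nat.lt_or_eq_of_le hgle with hlt | heq
    · exfalso
      have := (Nat.fib_lt_fib hge).mpr hlt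
      omega
    · rw [← heq]; exact Nat.gcd_dvd_right l n

lemma three_dvd_of_even (l : ℕ) (h : 2 ∣ fib l) : 3 ∣ l := by
  have hg : fib (Nat.gcd 3 l) = 2 := by
    rw [Nat.fib_gcd]
    rw [show fib 3 = 2 by decide]
    exact Nat.gcd_eq_left h
  have hd : Nat.gcd 3 l ∣ 3 := Nat.gcd_dvd_left 3 l
  have h1 : 0 < Nat.gcd 3 l := Nat.gcd_pos_of_pos_left l (by norm_num)
  have h3 : Nat.gcd 3 l ≤ 3 := Nat.le_of_dvd (by norm_num) hd
  have hcases : Nat.gcd 3 l = 1 ∨ Nat.gcd 3 l = 2 ∨ Nat.gcd 3 l = 3 := by omega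
  rcases hcases with h' | h' | h'
  · rw [h'] at hg; norm_num at hg
  · rw [h'] at hd; norm_num at hd
  · exact h' ▸ Nat.gcd_dvd_right 3 l

theorem exact_div_fib_of_not_three_mod_six (k l n : ℕ)
    (hk : 2 ≤ k) (hl : 3 ≤ l) (hn : 1 ≤ n)
    (hdvd : Nat.fib l ^ k ∣ Nat.fib n) (hndvd : ¬ Nat.fib l ^ (k + 1) ∣ Nat.fib n)
    (hmod : l % 6 ≠ 3) :
    Nat.fib l ^ (k - 1) ∣ n / l ∧ ¬ Nat.fib l ^ k ∣ n / l := by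
  have hq2 : 2 ≤ fib l := by
    calc 2 = fib 3 := by decide
    _ ≤ fib l := Nat.fib_mono hl
  have hq0 : fib l ≠ 0 := by omega
  have hql : fib l ∣ fib n := dvd_trans (dvd_pow_self (fib l) (by omega : k ≠ 0)) hdvd
  obtain ⟨m, rfl⟩ := fib_l_dvd l n hl hql
  have hm : 1 ≤ m := by
    rcases Nat.eq_zero_or_pos m with h | h
    · subst h; simp at hn
    · exact h
  rw [Nat.mul_div_cancel_left m (by omega : 0 < l)]
  have hfib0 : fib (l*m) ≠ 0 := by
    have := Nat.fib_pos.mpr (show 0 < l*m from Nat.mul_pos (by omega) hm); omega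
  have hm0 : m ≠ 0 := by omega
  -- the parity condition
  have hcond : ∀ p : ℕ, p.Prime → p ∣ fib l →
      2 ≤ (fib l).factorization p ∨ p ≠ 2 := by
    intro p pp hpq
    by_cases hp2 : p = 2
    · left
      subst hp2
      have h3 : 3 ∣ l := three_dvd_of_even l hpq
      have h6 : 6 ∣ l := by omega
      have h8 : (2:ℕ) ^ 3 ∣ fib l := by
        have hdd := Nat.fib_dvd 6 l h6
        rw [show fib 6 = 8 by decide] at hdd
        exact dvd_trans (by norm_num) hdd
      have := (Nat.Prime.pow_dvd_iff_le_factorization Nat.prime_two hq0).mp h8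
      omega
    · right; exact hp2
  -- valuation facts per prime
  have hval : ∀ p : ℕ, p.Prime → p ∣ fib l →
      (fib (l*m)).factorization p = (fib l).factorization p + m.factorization p :=
    fun p pp hpq => fib_val p l m pp (by omega) hm hpq (hcond p pp hpq)
  constructor
  · rw [← Nat.factorization_le_iff_dvd (pow_ne_zero _ hq0) hm0]
    intro p
    rw [Nat.factorization_pow, Finsupp.smul_apply, smul_eq_mul]
    by_cases pp : p.Prime
    · by_cases hpq : p ∣ fib l
      · have hkc : k * (fib l).factorization p ≤ (fib (l*m)).factorization p := by
          have h1 := (Nat.factorization_le_iff_dvd (pow_ne_zero _ hq0) hfib0).mpr hdvd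
          have h2 := h1 p
          rwa [Nat.factorization_pow, Finsupp.smul_apply, smul_eq_mul] at h2
        rw [hval p pp hpq] at hkc
        have hkk : k - 1 + 1 = k := by omega
        have : (k-1) * (fib l).factorization p + (fib l).factorization p
            = k * (fib l).factorization p := by
          calc (k-1) * (fib l).factorization p + (fib l).factorization p
              = ((k-1)+1) * (fib l).factorization p := by ring
          _ = k * (fib l).factorization p := by rw [hkk]
        omega
      · rw [Nat.factorization_eq_zero_of_not_dvd hpq]; simp
    · rw [Nat.factorization_eq_zero_of_not_prime _ pp]; simp
  · intro hqk
    apply hndvd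
    rw [← Nat.factorization_le_iff_dvd (pow_ne_zero _ hq0) hfib0]
    intro p
    rw [Nat.factorization_pow, Finsupp.smul_apply, smul_eq_mul]
    by_cases pp : p.Prime
    · by_cases hpq : p ∣ fib l
      · have hkc : k * (fib l).factorization p ≤ m.factorization p := by
          have h1 := (Nat.factorization_le_iff_dvd (pow_ne_zero _ hq0) hm0).mpr hqk
          have h2 := h1 p
          rwa [Nat.factorization_pow, Finsupp.smul_apply, smul_eq_mul] at h2
        rw [hval p pp hpq]
        have : (k+1) * (fib l).factorization p
            = k * (fib l).factorization p + (fib l).factorization p := by ring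
        omega
      · rw [Nat.factorization_eq_zero_of_not_dvd hpq]; simp
    · rw [Nat.factorization_eq_zero_of_not_prime _ pp]; simp
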